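/- For t > 0, a positive integer q and 1 ≤ n ≤ q−1, the integral I over the infinite hyperbolic cone C_q of K_ℍ(t, d(z, γ_qⁿ z)) dμ(z) equals (e^{−t/4}/(q√(16πt))) ∫₀^∞ e^{−u²/(4t)} cosh(u/2)/(sinh²(u/2) + sin²(nπ/q)) du, where d(z,γ_qⁿ z) = arccosh(1 + 2sin²(nπ/q)sinh²(ρ)) for z at radius ρ. -/

import Mathlib

open Real MeasureTheory

/-- arccosh(x) = log(x + √(x²−1)). -/
noncomputable def arcosh (x : ℝ) : ℝ := Real.log (x + Real.sqrt (x ^ 2 - 1))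

/-- The real-time heat kernel on the hyperbolic plane, for `d > 0`. -/
noncomputable def heatKernelR (t : ℝ) (d : ℝ) : ℝ :=
  Real.sqrt 2 * Real.exp (-t / 4) / (4 * Real.pi * t) ^ ((3 : ℝ) / 2) *
    ∫ u in Set.Ioi d,
      u * Real.exp (-u ^ 2 / (4 * t)) / Real.sqrt (Real.cosh u - Real.cosh d)

open Set Filter

lemma cosh_arcosh {x : ℝ} (hx : 1 ≤ x) : Real.cosh (_root_.arcosh x) = x := by
  have h1 : (0:ℝ) ≤ x ^ 2 - 1 := by nlinarith
  have hs : Real.sqrt (x ^ 2 - 1) ^ 2 = x ^ 2 - 1 := Real.sq_sqrt h1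
  have hs0 : 0 ≤ Real.sqrt (x ^ 2 - 1) := Real.sqrt_nonneg _
  have hy : 0 < x + Real.sqrt (x ^ 2 - 1) := by nlinarith
  rw [_root_.arcosh, Real.cosh_eq, Real.exp_log hy, Real.exp_neg, Real.exp_log hy]
  have hinv : (x + Real.sqrt (x ^ 2 - 1))⁻¹ = x - Real.sqrt (x ^ 2 - 1) := by
    rw [eq_comm, inv_eq_one_div, eq_div_iff (ne_of_gt hy)]
    nlinarith
  rw [hinv]; ring

lemma arcosh_nonneg {x : ℝ} (hx : 1 ≤ x) : 0 ≤ _root_.arcosh x := by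
  apply Real.log_nonneg
  have := Real.sqrt_nonneg (x ^ 2 - 1); linarith

lemma arcosh_lt_iff {x u : ℝ} (hx : 1 ≤ x) (hu : 0 < u) :
    _root_.arcosh x < u ↔ x < Real.cosh u := by
  rw [← _root_.cosh_arcosh hx, Real.cosh_lt_cosh, _root_.cosh_arcosh hx,
    abs_of_nonneg (_root_.arcosh_nonneg hx), abs_of_pos hu]

lemma rho_deriv (s a : ℝ) (hs : 0 < s) (ha : 0 < a) {ρ : ℝ}
    (hρ : ρ ∈ Set.Ioo 0 (Real.arsinh (a / s))) :
    HasDerivAt (fun x => (s * Real.sqrt 2)⁻¹ *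
        Real.arcsin (Real.cosh x / Real.sqrt (1 + (a / s) ^ 2)))
      (Real.sinh ρ / Real.sqrt (2 * a ^ 2 - 2 * s ^ 2 * Real.sinh ρ ^ 2)) ρ := by
  set A := a / s with hA
  have hA0 : 0 < A := div_pos ha hs
  set V := Real.sqrt (1 + A ^ 2) with hV
  have hV2 : V ^ 2 = 1 + A ^ 2 := Real.sq_sqrt (by positivity)
  have hV1 : 1 < V := by nlinarith [Real.sqrt_nonneg (1 + A ^ 2)]
  have hVc : V = Real.cosh (Real.arsinh A) := (Real.cosh_arsinh A).symm
  have hsh : 0 < Real.sinh ρ := Real.sinh_pos_iff.mpr hρ.1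
  have hsha : Real.sinh ρ < A := by
    rw [← Real.sinh_arsinh A]; exact Real.sinh_lt_sinh.mpr hρ.2
  have hc1 : 1 ≤ Real.cosh ρ := Real.one_le_cosh ρ
  have hcV : Real.cosh ρ < V := by
    rw [hVc, Real.cosh_lt_cosh, abs_of_pos hρ.1,
      abs_of_pos (lt_trans hρ.1 hρ.2)]
    exact hρ.2
  have hx1 : Real.cosh ρ / V < 1 := (div_lt_one (by linarith)).mpr hcV
  have hx0 : 0 < Real.cosh ρ / V := div_pos (by linarith) (by linarith)
  have hd1 : HasDerivAt (fun x => Real.cosh x / V) (Real.sinh ρ / V) ρ :=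
    (Real.hasDerivAt_cosh ρ).div_const V
  have hd2 := (Real.hasDerivAt_arcsin (by linarith : Real.cosh ρ / V ≠ -1)
    (ne_of_lt hx1)).comp ρ hd1
  have hd3 := hd2.const_mul (s * Real.sqrt 2)⁻¹
  refine hd3.congr_deriv ?_
  have hw : 0 < A ^ 2 - Real.sinh ρ ^ 2 := by nlinarith
  have hVc2 : V ^ 2 - Real.cosh ρ ^ 2 = A ^ 2 - Real.sinh ρ ^ 2 := by
    rw [hV2, Real.cosh_sq]; ring
  have h1x : 1 - (Real.cosh ρ / V) ^ 2 = (A ^ 2 - Real.sinh ρ ^ 2) / V ^ 2 := by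
    rw [← hVc2]; field_simp
  have hsq : Real.sqrt (1 - (Real.cosh ρ / V) ^ 2)
      = Real.sqrt (A ^ 2 - Real.sinh ρ ^ 2) / V := by
    rw [h1x, Real.sqrt_div hw.le, Real.sqrt_sq (by linarith)]
  have h2 : 2 * a ^ 2 - 2 * s ^ 2 * Real.sinh ρ ^ 2
      = (s * Real.sqrt 2 * Real.sqrt (A ^ 2 - Real.sinh ρ ^ 2)) ^ 2 := by
    rw [mul_pow, mul_pow, Real.sq_sqrt (by norm_num : (0:ℝ) ≤ 2), Real.sq_sqrt hw.le,
      hA, div_pow]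
    field_simp
  have h3 : Real.sqrt (2 * a ^ 2 - 2 * s ^ 2 * Real.sinh ρ ^ 2)
      = s * Real.sqrt 2 * Real.sqrt (A ^ 2 - Real.sinh ρ ^ 2) := by
    rw [h2, Real.sqrt_sq (by positivity)]
  have hwne : Real.sqrt (A ^ 2 - Real.sinh ρ ^ 2) ≠ 0 := (Real.sqrt_pos.mpr hw).ne'
  rw [hsq, h3]
  have h2ne : Real.sqrt 2 ≠ 0 := by positivity
  field_simp

lemma rho_nonneg (s a : ℝ) {ρ : ℝ} (hρ : 0 ≤ ρ) :
    0 ≤ Real.sinh ρ / Real.sqrt (2 * a ^ 2 - 2 * s ^ 2 * Real.sinh ρ ^ 2) :=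
  div_nonneg (Real.sinh_nonneg_iff.mpr hρ) (Real.sqrt_nonneg _)

lemma rho_integrableOn (s a : ℝ) (hs : 0 < s) (ha : 0 < a) :
    IntegrableOn (fun ρ => Real.sinh ρ / Real.sqrt (2 * a ^ 2 - 2 * s ^ 2 * Real.sinh ρ ^ 2))
      (Set.Ioo 0 (Real.arsinh (a / s))) := by
  rw [← integrableOn_Ioc_iff_integrableOn_Ioo]
  have hcont : Continuous fun x : ℝ => (s * Real.sqrt 2)⁻¹ *
      Real.arcsin (Real.cosh x / Real.sqrt (1 + (a / s) ^ 2)) :=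
    continuous_const.mul (Real.continuous_arcsin.comp (Real.continuous_cosh.div_const _))
  exact intervalIntegral.integrableOn_deriv_of_nonneg hcont.continuousOn
    (fun x hx => rho_deriv s a hs ha hx) (fun x hx => rho_nonneg s a hx.1.le)

lemma rho_integral (s a : ℝ) (hs : 0 < s) (ha : 0 < a) :
    ∫ ρ in Set.Ioo 0 (Real.arsinh (a / s)),
        Real.sinh ρ / Real.sqrt (2 * a ^ 2 - 2 * s ^ 2 * Real.sinh ρ ^ 2)
      = Real.arctan (a / s) / (s * Real.sqrt 2) := by
  have hA0 : 0 < a / s := div_pos ha hs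
  have hR : 0 < Real.arsinh (a / s) := by
    rw [← Real.sinh_lt_sinh, Real.sinh_zero, Real.sinh_arsinh]; exact hA0
  rw [← integral_Ioc_eq_integral_Ioo, ← intervalIntegral.integral_of_le hR.le]
  have hcont : Continuous fun x : ℝ => (s * Real.sqrt 2)⁻¹ *
      Real.arcsin (Real.cosh x / Real.sqrt (1 + (a / s) ^ 2)) :=
    continuous_const.mul (Real.continuous_arcsin.comp (Real.continuous_cosh.div_const _))
  rw [intervalIntegral.integral_eq_sub_of_hasDeriv_right_of_le hR.le
    hcont.continuousOn
    (fun x hx => (rho_deriv s a hs ha hx).hasDerivWithinAt)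
    ((intervalIntegrable_iff_integrableOn_Ioo_of_le hR.le).mpr (rho_integrableOn s a hs ha))]
  set A := a / s with hA
  have hV2 : Real.sqrt (1 + A ^ 2) ^ 2 = 1 + A ^ 2 := Real.sq_sqrt (by positivity)
  have hV1 : 1 < Real.sqrt (1 + A ^ 2) := by
    nlinarith [Real.sqrt_nonneg (1 + A ^ 2)]
  have h1 : Real.cosh (Real.arsinh A) / Real.sqrt (1 + A ^ 2) = 1 := by
    rw [Real.cosh_arsinh]; exact div_self (by linarith)
  have h2 : Real.arcsin (Real.cosh 0 / Real.sqrt (1 + A ^ 2)) = Real.arctan A⁻¹ := by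
    rw [Real.cosh_zero]
    have hmem : 1 / Real.sqrt (1 + A ^ 2) ∈ Set.Ioo (-(1:ℝ)) 1 := by
      have h0 : 0 < 1 / Real.sqrt (1 + A ^ 2) := by positivity
      constructor
      · linarith
      · rw [div_lt_one (by linarith)]; exact hV1
    rw [one_div, ← one_div, Real.arcsin_eq_arctan hmem]
    congr 1
    have : 1 - (1 / Real.sqrt (1 + A ^ 2)) ^ 2 = A ^ 2 / (1 + A ^ 2) := by
      rw [div_pow, one_pow, hV2]; field_simp; ring
    rw [this, Real.sqrt_div (by positivity), Real.sqrt_sq hA0.le]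
    have hVne : Real.sqrt (1 + A ^ 2) ≠ 0 := by positivity
    rw [eq_comm, inv_eq_one_div]
    rw [div_eq_div_iff hA0.ne' (by positivity)]
    field_simp
  rw [h1, Real.arcsin_one, h2, Real.arctan_inv_of_pos hA0]
  ring

lemma int_gauss_lin (t : ℝ) (ht : 0 < t) :
    Integrable (fun u : ℝ => u * Real.exp (-u ^ 2 / (4 * t))) := by
  have h := integrable_mul_exp_neg_mul_sq (b := (4 * t)⁻¹) (by positivity)
  convert h using 2 with u
  congr 1
  field_simp

lemma int_gauss_cosh (t : ℝ) (ht : 0 < t) :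
    IntegrableOn (fun u : ℝ => Real.exp (-u ^ 2 / (4 * t)) * Real.cosh (u / 2))
      (Set.Ioi 0) := by
  have hmaj : Integrable (fun u : ℝ =>
      Real.exp (t / 4) * Real.exp (-(4 * t)⁻¹ * (u - t) ^ 2)) :=
    ((integrable_exp_neg_mul_sq (b := (4 * t)⁻¹) (by positivity)).comp_sub_right t).const_mul _
  apply (hmaj.restrict (s := Set.Ioi 0)).mono'
  · exact ((Real.continuous_exp.comp (by fun_prop)).mul
      (Real.continuous_cosh.comp (by fun_prop))).aestronglyMeasurable
  · filter_upwards [ae_restrict_mem measurableSet_Ioi] with u hu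
    have hu0 : (0:ℝ) < u := hu
    have hch : Real.cosh (u / 2) ≤ Real.exp (u / 2) := by
      rw [Real.cosh_eq]
      have : Real.exp (-(u / 2)) ≤ Real.exp (u / 2) :=
        Real.exp_le_exp.mpr (by linarith)
      linarith
    have hnn : 0 < Real.exp (-u ^ 2 / (4 * t)) := Real.exp_pos _
    rw [Real.norm_eq_abs, abs_of_nonneg (by positivity)]
    calc Real.exp (-u ^ 2 / (4 * t)) * Real.cosh (u / 2)
        ≤ Real.exp (-u ^ 2 / (4 * t)) * Real.exp (u / 2) := by nlinarith
      _ = Real.exp (t / 4) * Real.exp (-(4 * t)⁻¹ * (u - t) ^ 2) := by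
          rw [← Real.exp_add, ← Real.exp_add]
          congr 1
          field_simp
          ring

lemma int_P (s t : ℝ) (hs : 0 < s) (ht : 0 < t) :
    IntegrableOn (fun u : ℝ => u * Real.exp (-u ^ 2 / (4 * t)) *
      Real.arctan (Real.sinh (u / 2) / s)) (Set.Ioi 0) := by
  apply (((int_gauss_lin t ht).const_mul (π / 2)).restrict (s := Set.Ioi 0)).mono'
  · exact (((continuous_id.mul (Real.continuous_exp.comp (by fun_prop)))).mul
      (Real.continuous_arctan.comp (by fun_prop))).aestronglyMeasurable
  · filter_upwards [ae_restrict_mem measurableSet_Ioi] with u hu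
    have hu0 : (0:ℝ) < u := hu
    have h1 : |Real.arctan (Real.sinh (u / 2) / s)| ≤ π / 2 := by
      rw [abs_le]
      exact ⟨(Real.neg_pi_div_two_lt_arctan _).le, (Real.arctan_lt_pi_div_two _).le⟩
    rw [Real.norm_eq_abs, abs_mul]
    have he : 0 < Real.exp (-u ^ 2 / (4 * t)) := Real.exp_pos _
    have : |u * Real.exp (-u ^ 2 / (4 * t))| = u * Real.exp (-u ^ 2 / (4 * t)) := by
      rw [abs_of_nonneg (by positivity)]
    rw [this]
    calc u * Real.exp (-u ^ 2 / (4 * t)) * |Real.arctan (Real.sinh (u / 2) / s)|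
        ≤ u * Real.exp (-u ^ 2 / (4 * t)) * (π / 2) :=
          mul_le_mul_of_nonneg_left h1 (by positivity)
      _ = π / 2 * (u * Real.exp (-u ^ 2 / (4 * t))) := by ring

lemma int_Q (s t : ℝ) (hs : 0 < s) (ht : 0 < t) :
    IntegrableOn (fun u : ℝ => t * s * (Real.exp (-u ^ 2 / (4 * t)) * Real.cosh (u / 2) /
      (s ^ 2 + Real.sinh (u / 2) ^ 2))) (Set.Ioi 0) := by
  apply (((int_gauss_cosh t ht)).const_mul (t / s)).mono'
  · apply Continuous.aestronglyMeasurable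
    apply continuous_const.mul
    apply Continuous.div ((Real.continuous_exp.comp (by fun_prop)).mul
      (Real.continuous_cosh.comp (by fun_prop))) (by fun_prop)
    intro x
    positivity
  · filter_upwards [ae_restrict_mem measurableSet_Ioi] with u hu
    have hd : s ^ 2 ≤ s ^ 2 + Real.sinh (u / 2) ^ 2 := by nlinarith [sq_nonneg (Real.sinh (u/2))]
    have hd0 : 0 < s ^ 2 + Real.sinh (u / 2) ^ 2 := by positivity
    have hnum : 0 ≤ Real.exp (-u ^ 2 / (4 * t)) * Real.cosh (u / 2) := by
      positivity
    rw [Real.norm_eq_abs, abs_of_nonneg (by positivity)]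
    calc t * s * (Real.exp (-u ^ 2 / (4 * t)) * Real.cosh (u / 2) /
          (s ^ 2 + Real.sinh (u / 2) ^ 2))
        ≤ t * s * (Real.exp (-u ^ 2 / (4 * t)) * Real.cosh (u / 2) / s ^ 2) := by
          gcongr
      _ = t / s * (Real.exp (-u ^ 2 / (4 * t)) * Real.cosh (u / 2)) := by
          field_simp

lemma ibp_deriv (s t : ℝ) (hs : 0 < s) (ht : 0 < t) (u : ℝ) :
    HasDerivAt (fun u => -(2 * t) * (Real.exp (-u ^ 2 / (4 * t)) *
        Real.arctan (Real.sinh (u / 2) / s)))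
      (u * Real.exp (-u ^ 2 / (4 * t)) * Real.arctan (Real.sinh (u / 2) / s)
        - t * s * (Real.exp (-u ^ 2 / (4 * t)) * Real.cosh (u / 2) /
          (s ^ 2 + Real.sinh (u / 2) ^ 2))) u := by
  have d1 : HasDerivAt (fun u : ℝ => -u ^ 2 / (4 * t)) (-(2 * u) / (4 * t)) u := by
    have h := ((hasDerivAt_pow 2 u).neg).div_const (4 * t)
    simpa using h
  have d2 := (Real.hasDerivAt_exp _).comp u d1
  have d3 : HasDerivAt (fun u : ℝ => Real.sinh (u / 2) / s)
      (Real.cosh (u / 2) * (1 / 2) / s) u := by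
    exact (((Real.hasDerivAt_sinh (u / 2)).comp u
      ((hasDerivAt_id u).div_const 2)).div_const s).congr_deriv (by ring : _ = Real.cosh (u / 2) * (1 / 2) / s)
  have d4 := (Real.hasDerivAt_arctan _).comp u d3
  have d5 := (d2.mul d4).const_mul (-(2 * t))
  refine d5.congr_deriv ?_
  have h1 : (0:ℝ) < 1 + (Real.sinh (u / 2) / s) ^ 2 := by positivity
  have h2 : (0:ℝ) < s ^ 2 + Real.sinh (u / 2) ^ 2 := by positivity
  simp only [Function.comp_apply]
  field_simp
  ring

lemma ibp_tendsto (s t : ℝ) (hs : 0 < s) (ht : 0 < t) :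
    Tendsto (fun u => -(2 * t) * (Real.exp (-u ^ 2 / (4 * t)) *
      Real.arctan (Real.sinh (u / 2) / s))) atTop (nhds 0) := by
  apply squeeze_zero_norm (a := fun u => 2 * t * (π / 2) * Real.exp (-u ^ 2 / (4 * t)))
  · intro u
    rw [Real.norm_eq_abs, abs_mul, abs_mul, abs_neg, abs_of_pos (by positivity : (0:ℝ) < 2 * t),
      abs_of_pos (Real.exp_pos _)]
    have h1 : |Real.arctan (Real.sinh (u / 2) / s)| ≤ π / 2 := by
      rw [abs_le]
      exact ⟨(Real.neg_pi_div_two_lt_arctan _).le, (Real.arctan_lt_pi_div_two _).le⟩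
    have h2 : Real.exp (-u ^ 2 / (4 * t)) * |Real.arctan (Real.sinh (u / 2) / s)|
        ≤ Real.exp (-u ^ 2 / (4 * t)) * (π / 2) :=
      mul_le_mul_of_nonneg_left h1 (Real.exp_pos _).le
    nlinarith [h2, ht]
  · have h2 : Tendsto (fun u : ℝ => -u ^ 2 / (4 * t)) atTop atBot := by
      apply Tendsto.atBot_div_const (by positivity)
      exact tendsto_neg_atBot_iff.mpr (tendsto_pow_atTop two_ne_zero)
    have h3 := Real.tendsto_exp_atBot.comp h2
    have h4 := h3.const_mul (2 * t * (π / 2))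
    simpa using h4

lemma u_IBP (s t : ℝ) (hs : 0 < s) (ht : 0 < t) :
    ∫ u in Set.Ioi (0:ℝ), u * Real.exp (-u ^ 2 / (4 * t)) * Real.arctan (Real.sinh (u / 2) / s)
      = ∫ u in Set.Ioi (0:ℝ), t * s * (Real.exp (-u ^ 2 / (4 * t)) * Real.cosh (u / 2) /
          (s ^ 2 + Real.sinh (u / 2) ^ 2)) := by
  have hint : IntegrableOn (fun u : ℝ =>
      u * Real.exp (-u ^ 2 / (4 * t)) * Real.arctan (Real.sinh (u / 2) / s)
        - t * s * (Real.exp (-u ^ 2 / (4 * t)) * Real.cosh (u / 2) /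
          (s ^ 2 + Real.sinh (u / 2) ^ 2))) (Set.Ioi 0) :=
    (int_P s t hs ht).sub (int_Q s t hs ht)
  have h0 := integral_Ioi_of_hasDerivAt_of_tendsto
    (Continuous.continuousWithinAt (continuous_const.mul
      ((Real.continuous_exp.comp (by fun_prop)).mul
        (Real.continuous_arctan.comp (by fun_prop)))))
    (fun x _ => ibp_deriv s t hs ht x) hint (ibp_tendsto s t hs ht)
  simp only [Function.comp_apply, Pi.mul_apply, zero_div, Real.sinh_zero, Real.arctan_zero, mul_zero,
    neg_zero, sub_zero, zero_sub, neg_neg] at h0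
  rw [integral_sub (int_P s t hs ht) (int_Q s t hs ht)] at h0
  linarith [h0]

/-- For `t > 0` and `1 ≤ n ≤ q−1`, the integral over the infinite hyperbolic cone
`C_q` of `K_ℍ(t, d(z, γ_qⁿ z)) dμ(z)`, with
`d(z,γ_qⁿz) = arccosh(1 + 2sin²(nπ/q)sinh²ρ)` and `dμ = q⁻¹ sinh ρ dρ dθ`, equals
`(e^{−t/4}/(q√(16πt))) ∫₀^∞ e^{−u²/(4t)} cosh(u/2)/(sinh²(u/2)+sin²(nπ/q)) du`. -/
theorem integral_heatKernel_cone (q n : ℕ) (hq : 0 < q) (hn1 : 1 ≤ n)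
    (hn2 : n ≤ q - 1) (t : ℝ) (ht : 0 < t) :
    (∫ θ in (0:ℝ)..(2 * π), ∫ ρ in Set.Ioi (0:ℝ),
        (q : ℝ)⁻¹ * Real.sinh ρ *
          heatKernelR t (_root_.arcosh (1 + 2 * Real.sin (n * π / q) ^ 2 * Real.sinh ρ ^ 2)))
      = Real.exp (-t / 4) / ((q : ℝ) * Real.sqrt (16 * π * t)) *
          ∫ u in Set.Ioi (0:ℝ),
            Real.exp (-u ^ 2 / (4 * t)) * Real.cosh (u / 2) /
              (Real.sinh (u / 2) ^ 2 + Real.sin (n * π / q) ^ 2) := by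
  have hq2 : 2 ≤ q := by omega
  have hnq : (n : ℝ) < q := by exact_mod_cast (by omega : n < q)
  have hn0 : (0:ℝ) < n := by exact_mod_cast hn1
  have hq0 : (0:ℝ) < q := by exact_mod_cast hq
  set s : ℝ := Real.sin (n * π / q) with hs_def
  have hs : 0 < s := by
    apply Real.sin_pos_of_pos_of_lt_pi
    · positivity
    · rw [div_lt_iff₀ hq0]
      nlinarith [Real.pi_pos]
  set C : ℝ := Real.sqrt 2 * Real.exp (-t / 4) / (4 * π * t) ^ ((3 : ℝ) / 2) with hC
  set d : ℝ → ℝ := fun ρ => _root_.arcosh (1 + 2 * s ^ 2 * Real.sinh ρ ^ 2) with hd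
  set H : ℝ → ℝ → ℝ := fun ρ u => Set.indicator (Set.Ioi (d ρ))
    (fun v => Real.sinh ρ * (v * Real.exp (-v ^ 2 / (4 * t)) /
      Real.sqrt (Real.cosh v - (1 + 2 * s ^ 2 * Real.sinh ρ ^ 2)))) u with hH
  have hX1 : ∀ ρ : ℝ, 1 ≤ 1 + 2 * s ^ 2 * Real.sinh ρ ^ 2 := fun ρ => by nlinarith [sq_nonneg (s * Real.sinh ρ)]
  have hd0 : ∀ ρ : ℝ, 0 ≤ d ρ := fun ρ => _root_.arcosh_nonneg (hX1 ρ)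
  have hcosh_d : ∀ ρ : ℝ, Real.cosh (d ρ) = 1 + 2 * s ^ 2 * Real.sinh ρ ^ 2 :=
    fun ρ => _root_.cosh_arcosh (hX1 ρ)
  -- Step 1: rewrite the inner integrand via H
  have key1 : ∀ ρ ∈ Set.Ioi (0:ℝ), Real.sinh ρ * heatKernelR t (d ρ)
      = C * ∫ u in Set.Ioi (0:ℝ), H ρ u := by
    intro ρ hρ
    have h1 : ∫ u in Set.Ioi (0:ℝ), H ρ u
        = ∫ u in Set.Ioi (d ρ), Real.sinh ρ * (u * Real.exp (-u ^ 2 / (4 * t)) /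
            Real.sqrt (Real.cosh u - (1 + 2 * s ^ 2 * Real.sinh ρ ^ 2))) := by
      rw [hH]
      rw [MeasureTheory.setIntegral_indicator measurableSet_Ioi,
        Set.inter_eq_self_of_subset_right (Set.Ioi_subset_Ioi (hd0 ρ))]
    rw [h1, MeasureTheory.integral_const_mul, heatKernelR, hcosh_d ρ]
    ring
  -- Step 2: compute the ρ-sections of H
  have key2 : ∀ u ∈ Set.Ioi (0:ℝ),
      (∫ ρ in Set.Ioi (0:ℝ), H ρ u)
        = (u * Real.exp (-u ^ 2 / (4 * t)) * Real.arctan (Real.sinh (u / 2) / s)) /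
            (s * Real.sqrt 2)
      ∧ IntegrableOn (fun ρ => H ρ u) (Set.Ioi 0) := by
    intro u hu
    have hu0 : (0:ℝ) < u := hu
    have ha : 0 < Real.sinh (u / 2) := Real.sinh_pos_iff.mpr (by linarith)
    set a : ℝ := Real.sinh (u / 2) with ha_def
    set R : ℝ := Real.arsinh (a / s) with hR_def
    have hcoshu : Real.cosh u = 1 + 2 * a ^ 2 := by
      have h := Real.cosh_two_mul (u / 2)
      rw [show 2 * (u / 2) = u by ring] at h
      rw [h, Real.cosh_sq]; ring
    have hiff : ∀ ρ ∈ Set.Ioi (0:ℝ), (d ρ < u ↔ ρ < R) := by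
      intro ρ hρ
      have hshρ : 0 < Real.sinh ρ := Real.sinh_pos_iff.mpr hρ
      have hRiff : (ρ < R) ↔ Real.sinh ρ < a / s := by
        rw [← Real.sinh_lt_sinh, hR_def, Real.sinh_arsinh]
      rw [hd]
      rw [_root_.arcosh_lt_iff (hX1 ρ) hu0, hcoshu, hRiff, lt_div_iff₀ hs]
      constructor
      · intro h; nlinarith [mul_pos hs hshρ, ha]
      · intro h; nlinarith [mul_pos hs hshρ, ha]
    set F : ℝ → ℝ := fun ρ => Real.sinh ρ * (u * Real.exp (-u ^ 2 / (4 * t)) /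
        Real.sqrt (2 * a ^ 2 - 2 * s ^ 2 * Real.sinh ρ ^ 2)) with hF
    have hHeq : Set.EqOn (fun ρ => H ρ u) (Set.indicator (Set.Ioo (0:ℝ) R) F)
        (Set.Ioi 0) := by
      intro ρ hρ
      have harg : Real.cosh u - (1 + 2 * s ^ 2 * Real.sinh ρ ^ 2)
          = 2 * a ^ 2 - 2 * s ^ 2 * Real.sinh ρ ^ 2 := by rw [hcoshu]; ring
      simp only [hH, hF, Set.indicator_apply, Set.mem_Ioi, Set.mem_Ioo, harg]
      by_cases hlt : d ρ < u
      · rw [if_pos hlt, if_pos ⟨hρ, (hiff ρ hρ).1 hlt⟩]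
      · rw [if_neg hlt, if_neg (fun hmem => hlt ((hiff ρ hρ).2 hmem.2))]
    have hFint : IntegrableOn F (Set.Ioo 0 R) := by
      have h : IntegrableOn (fun ρ : ℝ => u * Real.exp (-u ^ 2 / (4 * t)) *
          (Real.sinh ρ / Real.sqrt (2 * a ^ 2 - 2 * s ^ 2 * Real.sinh ρ ^ 2)))
          (Set.Ioo 0 R) := (rho_integrableOn s a hs ha).const_mul _
      exact h.congr_fun (fun ρ _ => by rw [hF]; ring) measurableSet_Ioo
    have hind : IntegrableOn (fun ρ => H ρ u) (Set.Ioi 0) := by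
      have h1 : Integrable (Set.indicator (Set.Ioo (0:ℝ) R) F) :=
        (integrable_indicator_iff measurableSet_Ioo).mpr hFint
      exact (h1.integrableOn).congr_fun hHeq.symm measurableSet_Ioi
    refine ⟨?_, hind⟩
    calc (∫ ρ in Set.Ioi (0:ℝ), H ρ u)
        = ∫ ρ in Set.Ioi (0:ℝ), Set.indicator (Set.Ioo (0:ℝ) R) F ρ :=
          setIntegral_congr_fun measurableSet_Ioi hHeq
      _ = ∫ ρ in Set.Ioi 0 ∩ Set.Ioo (0:ℝ) R, F ρ := setIntegral_indicator measurableSet_Ioo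
      _ = ∫ ρ in Set.Ioo (0:ℝ) R, F ρ := by
          rw [Set.inter_eq_self_of_subset_right Set.Ioo_subset_Ioi_self]
      _ = ∫ ρ in Set.Ioo (0:ℝ) R, (u * Real.exp (-u ^ 2 / (4 * t))) *
            (Real.sinh ρ / Real.sqrt (2 * a ^ 2 - 2 * s ^ 2 * Real.sinh ρ ^ 2)) :=
          setIntegral_congr_fun measurableSet_Ioo (fun ρ _ => by rw [hF]; ring)
      _ = (u * Real.exp (-u ^ 2 / (4 * t))) * ∫ ρ in Set.Ioo (0:ℝ) R,
            Real.sinh ρ / Real.sqrt (2 * a ^ 2 - 2 * s ^ 2 * Real.sinh ρ ^ 2) :=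
          MeasureTheory.integral_const_mul _ _
      _ = _ := by rw [hR_def, rho_integral s a hs ha]; ring
  -- measurability of H
  have hdm : Measurable d := by
    have hin : Continuous fun ρ : ℝ => (1 + 2 * s ^ 2 * Real.sinh ρ ^ 2) +
        Real.sqrt ((1 + 2 * s ^ 2 * Real.sinh ρ ^ 2) ^ 2 - 1) := by
      apply Continuous.add (by fun_prop)
      exact Real.continuous_sqrt.comp (by fun_prop)
    exact Real.measurable_log.comp hin.measurable
  have hHm : Measurable (Function.uncurry H) := by
    have hG : Measurable fun p : ℝ × ℝ => Real.sinh p.1 * (p.2 * Real.exp (-p.2 ^ 2 / (4 * t)) /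
        Real.sqrt (Real.cosh p.2 - (1 + 2 * s ^ 2 * Real.sinh p.1 ^ 2))) := by
      apply Measurable.mul (by fun_prop)
      apply Measurable.div (by fun_prop)
      exact Measurable.sqrt (by fun_prop)
    have hS : MeasurableSet {p : ℝ × ℝ | d p.1 < p.2} :=
      measurableSet_lt (hdm.comp measurable_fst) measurable_snd
    have heq : Function.uncurry H = Set.indicator {p : ℝ × ℝ | d p.1 < p.2}
        (fun p => Real.sinh p.1 * (p.2 * Real.exp (-p.2 ^ 2 / (4 * t)) /
          Real.sqrt (Real.cosh p.2 - (1 + 2 * s ^ 2 * Real.sinh p.1 ^ 2)))) := by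
      funext p
      simp only [Function.uncurry, hH, Set.indicator_apply, Set.mem_Ioi, Set.mem_setOf_eq]
    rw [heq]
    exact hG.indicator hS
  -- nonnegativity of H
  have hHnn : ∀ ρ ∈ Set.Ioi (0:ℝ), ∀ v, 0 ≤ H ρ v := by
    intro ρ hρ v
    rw [hH]
    apply Set.indicator_nonneg
    intro x hx
    have hx0 : 0 < x := lt_of_le_of_lt (hd0 ρ) hx
    have hsρ : 0 ≤ Real.sinh ρ := Real.sinh_nonneg_iff.mpr (le_of_lt hρ)
    positivity
  -- φ
  set φ : ℝ → ℝ := fun u => u * Real.exp (-u ^ 2 / (4 * t)) *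
      Real.arctan (Real.sinh (u / 2) / s) / (s * Real.sqrt 2) with hφ
  have hφnn : ∀ u ∈ Set.Ioi (0:ℝ), 0 ≤ φ u := by
    intro u hu
    have hu0 : (0:ℝ) < u := hu
    have harct : 0 ≤ Real.arctan (Real.sinh (u / 2) / s) := by
      rw [← Real.arctan_zero]
      apply Real.arctan_strictMono.monotone
      have : 0 ≤ Real.sinh (u / 2) := Real.sinh_nonneg_iff.mpr (by linarith)
      positivity
    rw [hφ]
    have h1 : 0 ≤ u * Real.exp (-u ^ 2 / (4 * t)) := by positivity
    exact div_nonneg (mul_nonneg h1 harct) (by positivity)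
  have hφint : IntegrableOn φ (Set.Ioi 0) := (int_P s t hs ht).div_const _
  -- Tonelli swap
  have key3 : (∫ ρ in Set.Ioi (0:ℝ), ∫ v in Set.Ioi (0:ℝ), H ρ v)
      = ∫ v in Set.Ioi (0:ℝ), φ v := by
    have hmes : AEMeasurable (Function.uncurry fun ρ v => ENNReal.ofReal (H ρ v))
        ((volume.restrict (Set.Ioi (0:ℝ))).prod (volume.restrict (Set.Ioi (0:ℝ)))) :=
      (ENNReal.measurable_ofReal.comp hHm).aemeasurable
    have hLswap := MeasureTheory.lintegral_lintegral_swap hmes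
    have hGu : ∀ v ∈ Set.Ioi (0:ℝ),
        (∫⁻ ρ in Set.Ioi (0:ℝ), ENNReal.ofReal (H ρ v)) = ENNReal.ofReal (φ v) := by
      intro v hv
      rw [← MeasureTheory.ofReal_integral_eq_lintegral_ofReal (key2 v hv).2
        (by filter_upwards [ae_restrict_mem measurableSet_Ioi] with ρ hρ; exact hHnn ρ hρ v)]
      rw [(key2 v hv).1, hφ]
    have h1 : (∫⁻ v in Set.Ioi (0:ℝ), ∫⁻ ρ in Set.Ioi (0:ℝ), ENNReal.ofReal (H ρ v))
        = ∫⁻ v in Set.Ioi (0:ℝ), ENNReal.ofReal (φ v) := by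
      apply lintegral_congr_ae
      filter_upwards [ae_restrict_mem measurableSet_Ioi] with v hv
      exact hGu v hv
    have h2 : (∫⁻ v in Set.Ioi (0:ℝ), ENNReal.ofReal (φ v))
        = ENNReal.ofReal (∫ v in Set.Ioi (0:ℝ), φ v) :=
      (MeasureTheory.ofReal_integral_eq_lintegral_ofReal hφint
        (by filter_upwards [ae_restrict_mem measurableSet_Ioi] with v hv; exact hφnn v hv)).symm
    have hFlm : Measurable fun ρ => ∫⁻ v in Set.Ioi (0:ℝ), ENNReal.ofReal (H ρ v) :=
      Measurable.lintegral_prod_right (ENNReal.measurable_ofReal.comp hHm)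
    have htot : (∫⁻ ρ in Set.Ioi (0:ℝ), ∫⁻ v in Set.Ioi (0:ℝ), ENNReal.ofReal (H ρ v))
        = ENNReal.ofReal (∫ v in Set.Ioi (0:ℝ), φ v) := by
      rw [hLswap, h1, h2]
    have hfin : ∀ᵐ ρ ∂(volume.restrict (Set.Ioi (0:ℝ))),
        (∫⁻ v in Set.Ioi (0:ℝ), ENNReal.ofReal (H ρ v)) < ⊤ := by
      apply ae_lt_top hFlm
      rw [htot]
      exact ENNReal.ofReal_ne_top
    have hsec : ∀ᵐ ρ ∂(volume.restrict (Set.Ioi (0:ℝ))),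
        (∫ v in Set.Ioi (0:ℝ), H ρ v)
          = (∫⁻ v in Set.Ioi (0:ℝ), ENNReal.ofReal (H ρ v)).toReal := by
      filter_upwards [ae_restrict_mem measurableSet_Ioi] with ρ hρ
      rw [MeasureTheory.integral_eq_lintegral_of_nonneg_ae
        (ae_of_all _ (fun v => hHnn ρ hρ v))
        ((hHm.comp measurable_prodMk_left).aestronglyMeasurable)]
    calc (∫ ρ in Set.Ioi (0:ℝ), ∫ v in Set.Ioi (0:ℝ), H ρ v)
        = ∫ ρ in Set.Ioi (0:ℝ),
            (∫⁻ v in Set.Ioi (0:ℝ), ENNReal.ofReal (H ρ v)).toReal :=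
          integral_congr_ae hsec
      _ = (∫⁻ ρ in Set.Ioi (0:ℝ), ∫⁻ v in Set.Ioi (0:ℝ), ENNReal.ofReal (H ρ v)).toReal :=
          integral_toReal hFlm.aemeasurable hfin
      _ = (ENNReal.ofReal (∫ v in Set.Ioi (0:ℝ), φ v)).toReal := by rw [htot]
      _ = ∫ v in Set.Ioi (0:ℝ), φ v :=
          ENNReal.toReal_ofReal (setIntegral_nonneg measurableSet_Ioi hφnn)
  -- assemble
  have hRiw : (∫ u in Set.Ioi (0:ℝ), t * s * (Real.exp (-u ^ 2 / (4 * t)) * Real.cosh (u / 2) /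
        (s ^ 2 + Real.sinh (u / 2) ^ 2)))
      = t * s * ∫ u in Set.Ioi (0:ℝ), Real.exp (-u ^ 2 / (4 * t)) * Real.cosh (u / 2) /
        (Real.sinh (u / 2) ^ 2 + s ^ 2) := by
    rw [MeasureTheory.integral_const_mul]
    congr 1
    apply setIntegral_congr_fun measurableSet_Ioi
    intro u _
    dsimp only
    rw [add_comm (s ^ 2)]
  have hφeq : (∫ v in Set.Ioi (0:ℝ), φ v)
      = t * s * (∫ u in Set.Ioi (0:ℝ), Real.exp (-u ^ 2 / (4 * t)) * Real.cosh (u / 2) /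
          (Real.sinh (u / 2) ^ 2 + s ^ 2)) / (s * Real.sqrt 2) := by
    rw [hφ, MeasureTheory.integral_div, u_IBP s t hs ht, hRiw]
  have hInner : (∫ ρ in Set.Ioi (0:ℝ), (q : ℝ)⁻¹ * Real.sinh ρ *
        heatKernelR t (_root_.arcosh (1 + 2 * s ^ 2 * Real.sinh ρ ^ 2)))
      = (q : ℝ)⁻¹ * C * ∫ v in Set.Ioi (0:ℝ), φ v := by
    rw [setIntegral_congr_fun (g := fun ρ => (q : ℝ)⁻¹ * C * (∫ u in Set.Ioi (0:ℝ), H ρ u))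
      measurableSet_Ioi ?_]
    · rw [MeasureTheory.integral_const_mul, key3]
    · intro ρ hρ
      have h := key1 ρ hρ
      rw [hd] at h
      simp only at h ⊢
      rw [mul_assoc, h]
      ring
  set Rint : ℝ := ∫ u in Set.Ioi (0:ℝ), Real.exp (-u ^ 2 / (4 * t)) * Real.cosh (u / 2) /
      (Real.sinh (u / 2) ^ 2 + s ^ 2) with hRint
  rw [intervalIntegral.integral_const, hInner, hφeq, smul_eq_mul, sub_zero]
  have hπ : (0:ℝ) < π := Real.pi_pos
  have hs2 : (0:ℝ) < Real.sqrt 2 := by positivity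
  have hs4 : (0:ℝ) < Real.sqrt (4 * π * t) := Real.sqrt_pos.mpr (by positivity)
  have h32 : (4 * π * t) ^ ((3:ℝ) / 2) = (4 * π * t) * Real.sqrt (4 * π * t) := by
    rw [show (3:ℝ) / 2 = 1 + 1 / 2 by norm_num, Real.rpow_add (by positivity), Real.rpow_one,
      ← Real.sqrt_eq_rpow]
  have h16 : Real.sqrt (16 * π * t) = 2 * Real.sqrt (4 * π * t) := by
    rw [show (16:ℝ) * π * t = 4 * (4 * π * t) by ring,
      Real.sqrt_mul (by norm_num : (0:ℝ) ≤ 4),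
      show Real.sqrt 4 = 2 by
        rw [show (4:ℝ) = 2 ^ 2 by norm_num, Real.sqrt_sq (by norm_num : (0:ℝ) ≤ 2)]]
  have hconst : 2 * π * ((q:ℝ)⁻¹ * C * (t * s / (s * Real.sqrt 2)))
      = Real.exp (-t / 4) / ((q:ℝ) * Real.sqrt (16 * π * t)) := by
    rw [hC, h32, h16]
    field_simp
    ring
  linear_combination Rint * hconst
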